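/- Let f be a monic polynomial of degree n ≥ 3 over ℂ with roots r_1, …, r_n (listed with multiplicity). Then Res_x(f, Res_y(f_1, f_2)) = 0 if and only if D_1·D_2 = 0, where D_1 and D_2 are the first and second discriminants of f. -/

import Mathlib

/-- The resultant of two univariate polynomials `p, q` over a commutative ring,
defined as the determinant of the Sylvester matrix of `p` and `q` built from their
(actual) degrees: it has `q.natDegree` shifted rows of coefficients of `p` followed by
`p.natDegree` shifted rows of coefficients of `q`. -/
noncomputable def sylResultant {R : Type} [CommRing R] (p q : Polynomial R) : R :=
  Matrix.det (Matrix.of fun i j : Fin (p.natDegree + q.natDegree) =>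
    if (i : ℕ) < q.natDegree then
      (if (i : ℕ) ≤ (j : ℕ) ∧ (j : ℕ) ≤ (i : ℕ) + p.natDegree
        then p.coeff ((i : ℕ) + p.natDegree - (j : ℕ)) else 0)
    else
      (if (i : ℕ) - q.natDegree ≤ (j : ℕ) ∧ (j : ℕ) ≤ ((i : ℕ) - q.natDegree) + q.natDegree
        then q.coeff (((i : ℕ) - q.natDegree) + q.natDegree - (j : ℕ)) else 0))

open Polynomial Finset Matrix

namespace SylAux

variable {R : Type} [CommRing R]

lemma coeff_sum_monomial (k : ℕ) (v : ℕ → R) (e : ℕ) :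
    (∑ i ∈ range k, monomial i (v i)).coeff e = if e < k then v e else 0 := by
  rw [finset_sum_coeff]
  by_cases h : e < k
  · rw [if_pos h, Finset.sum_eq_single e]
    · simp
    · intro b _ hb; simp [coeff_monomial, hb]
    · intro h'; exact absurd (mem_range.2 h) h'
  · rw [if_neg h, Finset.sum_eq_zero]
    intro b hb
    have : b ≠ e := by rintro rfl; exact h (mem_range.1 hb)
    simp [coeff_monomial, this]

lemma coeff_sum_monomial_mul (k : ℕ) (v : ℕ → R) (p : R[X]) (d : ℕ) :
    ((∑ i ∈ range k, monomial i (v i)) * p).coeff d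
      = ∑ i ∈ range k, if i ≤ d then v i * p.coeff (d - i) else 0 := by
  rw [Finset.sum_mul, finset_sum_coeff]
  refine Finset.sum_congr rfl fun i _ => ?_
  rw [← C_mul_X_pow_eq_monomial, mul_assoc, coeff_C_mul, coeff_X_pow_mul']
  split <;> simp

/-- the Sylvester matrix -/
def sylM (p q : R[X]) : Matrix (Fin (p.natDegree + q.natDegree))
    (Fin (p.natDegree + q.natDegree)) R :=
  Matrix.of fun i j =>
    if (i : ℕ) < q.natDegree then
      (if (i : ℕ) ≤ (j : ℕ) ∧ (j : ℕ) ≤ (i : ℕ) + p.natDegree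
        then p.coeff ((i : ℕ) + p.natDegree - (j : ℕ)) else 0)
    else
      (if (i : ℕ) - q.natDegree ≤ (j : ℕ) ∧ (j : ℕ) ≤ ((i : ℕ) - q.natDegree) + q.natDegree
        then q.coeff (((i : ℕ) - q.natDegree) + q.natDegree - (j : ℕ)) else 0)

lemma sylResultant_eq (p q : R[X]) : sylResultant p q = (sylM p q).det := rfl

/-- extend a `Fin N` vector to `ℕ` by zero -/
def extv (N : ℕ) (u : Fin N → R) : ℕ → R := fun t => if h : t < N then u ⟨t, h⟩ else 0

/-- the polynomial built from the first `k` coordinates of `u` (reversed) -/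
noncomputable def pa (m k : ℕ) (u : Fin (m + k) → R) : R[X] :=
  ∑ i ∈ range k, monomial i (extv (m + k) u (k - 1 - i))

/-- the polynomial built from the last `m` coordinates of `u` (reversed) -/
noncomputable def pb (m k : ℕ) (u : Fin (m + k) → R) : R[X] :=
  ∑ i ∈ range m, monomial i (extv (m + k) u (k + (m - 1 - i)))

lemma term_eq (deg rows t j d : ℕ) (p : R[X]) (hdeg : p.natDegree ≤ deg)
    (ht : t < rows) (hj : j < deg + rows) (hd : d = deg + rows - 1 - j) (c : ℕ → R) :
    c t * (if t ≤ j ∧ j ≤ t + deg then p.coeff (t + deg - j) else 0)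
      = if rows - 1 - t ≤ d
        then c (rows - 1 - (rows - 1 - t)) * p.coeff (d - (rows - 1 - t)) else 0 := by
  subst hd
  have hct : rows - 1 - (rows - 1 - t) = t := by omega
  rw [hct]
  by_cases hc : j ≤ t + deg
  · by_cases h2 : t ≤ j
    · have e1 : (deg + rows - 1 - j) - (rows - 1 - t) = t + deg - j := by omega
      rw [e1, if_pos (⟨h2, hc⟩ : t ≤ j ∧ j ≤ t + deg),
        if_pos (show rows - 1 - t ≤ deg + rows - 1 - j by omega)]
    · have hz : p.coeff ((deg + rows - 1 - j) - (rows - 1 - t)) = 0 :=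
        coeff_eq_zero_of_natDegree_lt (by omega)
      rw [if_neg (show ¬(t ≤ j ∧ j ≤ t + deg) from fun h => h2 h.1), mul_zero, hz]
      simp
  · rw [if_neg (show ¬(t ≤ j ∧ j ≤ t + deg) from fun h => hc h.2), mul_zero,
      if_neg (show ¬(rows - 1 - t ≤ deg + rows - 1 - j) by omega)]

lemma vecMul_sylM (p q : R[X]) (u : Fin (p.natDegree + q.natDegree) → R)
    (j : Fin (p.natDegree + q.natDegree)) :
    (u ᵥ* sylM p q) j
      = (pa p.natDegree q.natDegree u * p + pb p.natDegree q.natDegree u * q).coeff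
          (p.natDegree + q.natDegree - 1 - (j : ℕ)) := by
  have hj : (j : ℕ) < p.natDegree + q.natDegree := j.2
  have L1 : (u ᵥ* sylM p q) j = ∑ t ∈ range (p.natDegree + q.natDegree),
      extv (p.natDegree + q.natDegree) u t *
        (if t < q.natDegree then
          (if t ≤ (j : ℕ) ∧ (j : ℕ) ≤ t + p.natDegree
            then p.coeff (t + p.natDegree - (j : ℕ)) else 0)
        else
          (if t - q.natDegree ≤ (j : ℕ) ∧ (j : ℕ) ≤ (t - q.natDegree) + q.natDegree
            then q.coeff ((t - q.natDegree) + q.natDegree - (j : ℕ)) else 0)) := by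
    rw [← Fin.sum_univ_eq_sum_range]
    simp only [Matrix.vecMul, dotProduct, sylM, Matrix.of_apply]
    refine Finset.sum_congr rfl fun i _ => ?_
    rw [extv, dif_pos i.2]
  rw [L1, Finset.range_eq_Ico,
    ← Finset.sum_Ico_consecutive _ (Nat.zero_le q.natDegree) le_add_self,
    ← Finset.range_eq_Ico, Finset.sum_Ico_eq_sum_range]
  simp only [Nat.add_sub_cancel]
  rw [coeff_add, pa, pb, coeff_sum_monomial_mul, coeff_sum_monomial_mul]
  congr 1
  · conv_rhs => rw [← Finset.sum_range_reflect]
    refine Finset.sum_congr rfl fun t ht => ?_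
    rw [if_pos (mem_range.1 ht)]
    exact term_eq p.natDegree q.natDegree t (j : ℕ) _ p le_rfl (mem_range.1 ht) hj rfl _
  · conv_rhs => rw [← Finset.sum_range_reflect]
    refine Finset.sum_congr rfl fun t ht => ?_
    rw [if_neg (by omega)]
    simp only [Nat.add_sub_cancel_left]
    have := term_eq q.natDegree p.natDegree t (j : ℕ)
      (p.natDegree + q.natDegree - 1 - (j : ℕ)) q le_rfl (mem_range.1 ht) (by omega)
      (by omega) (fun s => extv (p.natDegree + q.natDegree) u (q.natDegree + s))
    exact this

end SylAux

namespace SylAux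

variable {R : Type} [CommRing R]

lemma extv_coe {N : ℕ} (u : Fin N → R) (i : Fin N) : extv N u (i : ℕ) = u i := by
  rw [extv, dif_pos i.2]

lemma coeff_pa (m k : ℕ) (u : Fin (m + k) → R) (e : ℕ) :
    (pa m k u).coeff e = if e < k then extv (m + k) u (k - 1 - e) else 0 :=
  coeff_sum_monomial k _ e

lemma coeff_pb (m k : ℕ) (u : Fin (m + k) → R) (e : ℕ) :
    (pb m k u).coeff e = if e < m then extv (m + k) u (k + (m - 1 - e)) else 0 :=
  coeff_sum_monomial m _ e

theorem sylResultant_eq_zero_iff_exists {F : Type} [Field F] (p q : F[X]) :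
    sylResultant p q = 0 ↔ ∃ a b : F[X], ¬(a = 0 ∧ b = 0) ∧
      (a.degree < (q.natDegree : WithBot ℕ)) ∧ (b.degree < (p.natDegree : WithBot ℕ)) ∧
      a * p + b * q = 0 := by
  rw [sylResultant_eq, ← Matrix.exists_vecMul_eq_zero_iff]
  constructor
  · rintro ⟨u, hu, huM⟩
    refine ⟨pa p.natDegree q.natDegree u, pb p.natDegree q.natDegree u, ?_, ?_, ?_, ?_⟩
    · rintro ⟨ha, hb⟩
      apply hu
      funext i
      by_cases hik : (i : ℕ) < q.natDegree
      · have h1 := coeff_pa p.natDegree q.natDegree u (q.natDegree - 1 - (i : ℕ))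
        rw [ha, coeff_zero, if_pos (by omega)] at h1
        have h2 : q.natDegree - 1 - (q.natDegree - 1 - (i : ℕ)) = (i : ℕ) := by omega
        rw [h2, extv_coe] at h1
        exact h1.symm
      · have him : (i : ℕ) - q.natDegree < p.natDegree := by
          have := i.2; omega
        have h1 := coeff_pb p.natDegree q.natDegree u
          (p.natDegree - 1 - ((i : ℕ) - q.natDegree))
        rw [hb, coeff_zero, if_pos (by omega)] at h1
        have h2 : q.natDegree + (p.natDegree - 1 - (p.natDegree - 1 - ((i : ℕ) - q.natDegree)))
            = (i : ℕ) := by omega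
        rw [h2, extv_coe] at h1
        exact h1.symm
    · refine (degree_lt_iff_coeff_zero _ _).2 fun e he => ?_
      rw [coeff_pa, if_neg (by exact_mod_cast not_lt.2 (by exact_mod_cast he))]
    · refine (degree_lt_iff_coeff_zero _ _).2 fun e he => ?_
      rw [coeff_pb, if_neg (by exact_mod_cast not_lt.2 (by exact_mod_cast he))]
    · ext d
      rw [coeff_zero]
      by_cases hd : d < p.natDegree + q.natDegree
      · have h1 := congrFun huM ⟨p.natDegree + q.natDegree - 1 - d, by omega⟩
        rw [vecMul_sylM] at h1
        simp only [Pi.zero_apply] at h1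
        have h2 : p.natDegree + q.natDegree - 1 -
            (p.natDegree + q.natDegree - 1 - d) = d := by omega
        rw [h2] at h1
        exact h1
      · rw [coeff_add, pa, pb, coeff_sum_monomial_mul, coeff_sum_monomial_mul,
          Finset.sum_eq_zero, Finset.sum_eq_zero, add_zero]
        · intro t ht
          rw [coeff_eq_zero_of_natDegree_lt (by have := mem_range.1 ht; omega), mul_zero,
            ite_self]
        · intro t ht
          rw [coeff_eq_zero_of_natDegree_lt (by have := mem_range.1 ht; omega), mul_zero,
            ite_self]
  · rintro ⟨a, b, hne, hda, hdb, heq⟩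
    classical
    set m := p.natDegree with hm
    set k := q.natDegree with hk
    have hak : ∀ e, k ≤ e → a.coeff e = 0 := fun e he =>
      (degree_lt_iff_coeff_zero a k).1 hda e (by exact_mod_cast he)
    have hbm : ∀ e, m ≤ e → b.coeff e = 0 := fun e he =>
      (degree_lt_iff_coeff_zero b m).1 hdb e (by exact_mod_cast he)
    refine ⟨fun i => if (i : ℕ) < k then a.coeff (k - 1 - (i : ℕ))
      else b.coeff (m - 1 - ((i : ℕ) - k)), ?_, ?_⟩
    · -- u ≠ 0
      intro h0
      apply hne
      constructor
      · ext e
        rw [coeff_zero]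
        by_cases hek : e < k
        · have h1 := congrFun h0 ⟨k - 1 - e, by omega⟩
          simp only [Pi.zero_apply, Fin.val_mk] at h1
          rw [if_pos (show k - 1 - e < k by omega)] at h1
          have h2 : k - 1 - (k - 1 - e) = e := by omega
          rwa [h2] at h1
        · exact hak e (by omega)
      · ext e
        rw [coeff_zero]
        by_cases hem : e < m
        · have h1 := congrFun h0 ⟨k + (m - 1 - e), by omega⟩
          simp only [Pi.zero_apply, Fin.val_mk] at h1
          rw [if_neg (show ¬ k + (m - 1 - e) < k by omega)] at h1
          have h2 : m - 1 - (k + (m - 1 - e) - k) = e := by omega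
          rwa [h2] at h1
        · exact hbm e (by omega)
    · -- vecMul is zero
      funext j
      rw [vecMul_sylM]
      have hpa : pa m k (fun i : Fin (m + k) => if (i : ℕ) < k then a.coeff (k - 1 - (i : ℕ))
          else b.coeff (m - 1 - ((i : ℕ) - k))) = a := by
        ext e
        rw [coeff_pa]
        by_cases hek : e < k
        · rw [if_pos hek, extv, dif_pos (show k - 1 - e < m + k by omega),
            if_pos (show k - 1 - e < k by omega)]
          simp only [Fin.val_mk]
          congr 1
          omega
        · rw [if_neg hek, (hak e (by omega)).symm]
      have hpb : pb m k (fun i : Fin (m + k) => if (i : ℕ) < k then a.coeff (k - 1 - (i : ℕ))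
          else b.coeff (m - 1 - ((i : ℕ) - k))) = b := by
        ext e
        rw [coeff_pb]
        by_cases hem : e < m
        · rw [if_pos hem, extv, dif_pos (show k + (m - 1 - e) < m + k by omega),
            if_neg (show ¬ k + (m - 1 - e) < k by omega)]
          simp only [Fin.val_mk]
          congr 1
          omega
        · rw [if_neg hem, (hbm e (by omega)).symm]
      rw [hpa, hpb, heq, coeff_zero, Pi.zero_apply]

end SylAux

namespace SylAux

theorem sylResultant_eq_zero_iff_common_root (p q : Polynomial ℂ) (hp : p ≠ 0) (hq : q ≠ 0) :
    sylResultant p q = 0 ↔ ∃ z : ℂ, p.eval z = 0 ∧ q.eval z = 0 := by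
  rw [sylResultant_eq_zero_iff_exists]
  constructor
  · rintro ⟨a, b, hne, hda, hdb, heq⟩
    have hb0 : b ≠ 0 := by
      rintro rfl
      rw [zero_mul, add_zero, mul_eq_zero] at heq
      rcases heq with h | h
      · exact hne ⟨h, rfl⟩
      · exact hp h
    by_contra hroot
    push_neg at hroot
    classical
    have hcop : IsCoprime p q := by
      rw [← EuclideanDomain.gcd_isUnit_iff]
      by_contra hgu
      have hg0 : EuclideanDomain.gcd p q ≠ 0 := fun h =>
        hp (EuclideanDomain.gcd_eq_zero_iff.1 h).1
      have hdeg : 0 < (EuclideanDomain.gcd p q).degree := by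
        rcases lt_or_eq_of_le (Nat.cast_nonneg' ((EuclideanDomain.gcd p q).natDegree) :
          (0 : WithBot ℕ) ≤ _) with h | h
        · calc (0 : WithBot ℕ) < (EuclideanDomain.gcd p q).natDegree := h
            _ = (EuclideanDomain.gcd p q).degree := (degree_eq_natDegree hg0).symm
        · exact absurd (isUnit_iff_degree_eq_zero.2 (by
            rw [degree_eq_natDegree hg0, ← h])) hgu
      obtain ⟨z, hz⟩ := Complex.exists_root hdeg
      have hzp : p.eval z = 0 := by
        obtain ⟨c, hc⟩ := EuclideanDomain.gcd_dvd_left p q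
        rw [hc, eval_mul, hz, zero_mul]
      have hzq : q.eval z = 0 := by
        obtain ⟨c, hc⟩ := EuclideanDomain.gcd_dvd_right p q
        rw [hc, eval_mul, hz, zero_mul]
      exact hroot z hzp hzq
    have hdvd : p ∣ b * q := ⟨-a, by linear_combination heq⟩
    have hpb : p ∣ b := hcop.dvd_of_dvd_mul_right hdvd
    have := Polynomial.degree_le_of_dvd hpb hb0
    rw [← degree_eq_natDegree hp] at hdb
    exact absurd (lt_of_le_of_lt this hdb) (lt_irrefl _)
  · rintro ⟨z, hzp, hzq⟩
    obtain ⟨p₁, hp₁⟩ := (dvd_iff_isRoot.2 hzp : (X - C z) ∣ p)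
    obtain ⟨q₁, hq₁⟩ := (dvd_iff_isRoot.2 hzq : (X - C z) ∣ q)
    have hp₁0 : p₁ ≠ 0 := by rintro rfl; rw [mul_zero] at hp₁; exact hp hp₁
    have hq₁0 : q₁ ≠ 0 := by rintro rfl; rw [mul_zero] at hq₁; exact hq hq₁
    refine ⟨q₁, -p₁, fun h => hq₁0 h.1, ?_, ?_, by rw [hp₁, hq₁]; ring⟩
    · have h1 : q.natDegree = 1 + q₁.natDegree := by
        rw [hq₁, natDegree_mul (X_sub_C_ne_zero z) hq₁0, natDegree_X_sub_C]
      calc q₁.degree ≤ (q₁.natDegree : WithBot ℕ) := degree_le_natDegree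
        _ < (q.natDegree : WithBot ℕ) := by exact_mod_cast (by omega : q₁.natDegree < q.natDegree)
    · have h1 : p.natDegree = 1 + p₁.natDegree := by
        rw [hp₁, natDegree_mul (X_sub_C_ne_zero z) hp₁0, natDegree_X_sub_C]
      calc (-p₁).degree = p₁.degree := degree_neg p₁
        _ ≤ (p₁.natDegree : WithBot ℕ) := degree_le_natDegree
        _ < (p.natDegree : WithBot ℕ) := by exact_mod_cast (by omega : p₁.natDegree < p.natDegree)

/-- explicit-size Sylvester matrix -/
def sylM' (m k : ℕ) {R : Type} [CommRing R] (p q : R[X]) :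
    Matrix (Fin (m + k)) (Fin (m + k)) R :=
  Matrix.of fun i j =>
    if (i : ℕ) < k then
      (if (i : ℕ) ≤ (j : ℕ) ∧ (j : ℕ) ≤ (i : ℕ) + m
        then p.coeff ((i : ℕ) + m - (j : ℕ)) else 0)
    else
      (if (i : ℕ) - k ≤ (j : ℕ) ∧ (j : ℕ) ≤ ((i : ℕ) - k) + k
        then q.coeff (((i : ℕ) - k) + k - (j : ℕ)) else 0)

lemma sylResultant_eq' {R : Type} [CommRing R] (p q : R[X]) :
    sylResultant p q = (sylM' p.natDegree q.natDegree p q).det := rfl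

lemma map_sylResultant {R S : Type} [CommRing R] [CommRing S] (φ : R →+* S) (p q : R[X])
    (hp : (p.map φ).natDegree = p.natDegree) (hq : (q.map φ).natDegree = q.natDegree) :
    φ (sylResultant p q) = sylResultant (p.map φ) (q.map φ) := by
  rw [sylResultant_eq', sylResultant_eq' (p.map φ), hp, hq, RingHom.map_det]
  congr 1
  ext i j
  simp only [sylM', RingHom.mapMatrix_apply, Matrix.map_apply, Matrix.of_apply, coeff_map,
    apply_ite φ, map_zero]

lemma sylResultant_zero_right (p : Polynomial ℂ) (hp : 0 < p.natDegree) :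
    sylResultant p (0 : Polynomial ℂ) = 0 := by
  rw [sylResultant_eq]
  have h : sylM p (0 : Polynomial ℂ) = 0 := by
    ext i j
    simp [sylM]
    rfl
  rw [h]
  haveI : Nonempty (Fin (p.natDegree + (0 : Polynomial ℂ).natDegree)) := ⟨⟨0, by simpa using hp⟩⟩
  exact Matrix.det_zero

end SylAux

namespace SylAux

lemma half_factor (a b : ℂ) :
    (C a + X) * C (2⁻¹ : ℂ) - C b = C (2⁻¹ : ℂ) * (X - C (2 * b - a)) := by
  have h2 : (C (2⁻¹ : ℂ)) * (C (2 : ℂ)) = 1 := by rw [← C_mul]; norm_num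
  simp only [_root_.map_sub, _root_.map_mul]
  linear_combination (C b) * h2

lemma biv_factor (c : ℂ) :
    ((C (X : Polynomial ℂ) + X) * C (C (2⁻¹ : ℂ))) - C (C c)
      = C (C (2⁻¹ : ℂ)) * X + C ((X : Polynomial ℂ) * C (2⁻¹ : ℂ) - C c) := by
  simp only [add_mul, _root_.map_sub, _root_.map_mul]
  ring

lemma ite_one_eq_zero {c : Prop} [Decidable c] {x : ℂ} :
    ((if c then x else 1) = 0) ↔ (c ∧ x = 0) := by
  split_ifs with h <;> simp [h]

end SylAux

open SylAux


/-- Let `f` be a monic polynomial of degree `n ≥ 3` over `ℂ` with roots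
`r 0, …, r (n-1)` (with multiplicity). Bivariate polynomials in `x, y` are represented as
elements of `Polynomial (Polynomial ℂ)`, the outer variable being `y` and the inner one
`x`; `f₁` and `f₂` are determined by `(y - x)·f₁ = f(y) - f(x)` and
`((y - x)/2)·f₂ = f((x+y)/2) - f(x)`.  Then
`Res_x(f, Res_y(f₁, f₂)) = 0 ↔ D₁ · D₂ = 0`, where `D₁ = ∏_{i<j} (r i - r j)²` and
`D₂ = ∏_{i<j, k∉{i,j}} (2 r k - r i - r j)` are the first and second discriminants. -/
theorem resultant_f1_f2_eq_zero_iff_D1_mul_D2_eq_zero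
    (n : ℕ) (hn : 3 ≤ n) (r : Fin n → ℂ) (f : Polynomial ℂ)
    (hf : f = ∏ i : Fin n, (Polynomial.X - Polynomial.C (r i)))
    (f1 f2 : Polynomial (Polynomial ℂ))
    (hf1 : (Polynomial.X - Polynomial.C Polynomial.X) * f1 =
      f.map Polynomial.C - Polynomial.C f)
    (hf2 : (Polynomial.X - Polynomial.C Polynomial.X) *
        Polynomial.C (Polynomial.C (2⁻¹ : ℂ)) * f2 =
      Polynomial.eval₂ (Polynomial.C.comp Polynomial.C)
          ((Polynomial.C Polynomial.X + Polynomial.X) * Polynomial.C (Polynomial.C (2⁻¹ : ℂ)))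
          f
        - Polynomial.C f) :
    sylResultant f (sylResultant f1 f2) = 0 ↔
      (∏ i : Fin n, ∏ j : Fin n, if i < j then (r i - r j) ^ 2 else 1) *
        (∏ i : Fin n, ∏ j : Fin n, ∏ k : Fin n,
          if i < j ∧ k ≠ i ∧ k ≠ j then 2 * r k - r i - r j else 1) = 0 := by
  classical
  have h2 : (2 : ℂ) ≠ 0 := two_ne_zero
  have hhalf : (2⁻¹ : ℂ) ≠ 0 := inv_ne_zero h2
  have hno : 0 < n := by omega
  have hfm : f.Monic := hf ▸ monic_prod_of_monic _ _ fun i _ => monic_X_sub_C (r i)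
  have hfd : f.natDegree = n := by
    rw [hf, natDegree_prod _ _ fun i _ => X_sub_C_ne_zero (r i)]
    simp [natDegree_X_sub_C]
  have hf0 : f ≠ 0 := hfm.ne_zero
  -- f1 facts
  have hXC0 : (X - C (X : Polynomial ℂ)) ≠ 0 := (monic_X_sub_C _).ne_zero
  have hG1deg : (f.map (C : ℂ →+* Polynomial ℂ)).natDegree = n := by
    rw [hfm.natDegree_map, hfd]
  have hG1ne : (f.map (C : ℂ →+* Polynomial ℂ)) ≠ 0 := (hfm.map _).ne_zero
  have hsub_deg : (f.map (C : ℂ →+* Polynomial ℂ) - C f).natDegree = n := by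
    rw [natDegree_sub_eq_left_of_natDegree_lt (by rw [natDegree_C, hG1deg]; omega), hG1deg]
  have hsub_lc : (f.map (C : ℂ →+* Polynomial ℂ) - C f).leadingCoeff = 1 := by
    rw [leadingCoeff_sub_of_degree_lt, (hfm.map (C : ℂ →+* Polynomial ℂ)).leadingCoeff]
    calc (C f).degree ≤ 0 := degree_C_le
      _ < (f.map (C : ℂ →+* Polynomial ℂ)).degree := by
        rw [degree_eq_natDegree hG1ne, hG1deg]
        exact_mod_cast hno
  have hsub_ne : (f.map (C : ℂ →+* Polynomial ℂ) - C f) ≠ 0 := fun h => by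
    rw [h, leadingCoeff_zero] at hsub_lc; exact one_ne_zero hsub_lc.symm
  have hf1_0 : f1 ≠ 0 := by rintro rfl; rw [mul_zero] at hf1; exact hsub_ne hf1.symm
  have hf1deg : f1.natDegree = n - 1 := by
    have h := natDegree_mul hXC0 hf1_0
    rw [hf1, hsub_deg, natDegree_X_sub_C] at h
    omega
  have hf1lc : f1.leadingCoeff = 1 := by
    have h := leadingCoeff_mul (X - C (X : Polynomial ℂ)) f1
    rw [hf1, hsub_lc, leadingCoeff_X_sub_C, one_mul] at h
    exact h.symm
  -- facts about g = eval₂ (C∘C) S f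
  set S : Polynomial (Polynomial ℂ) := (C (X : Polynomial ℂ) + X) * C (C (2⁻¹ : ℂ)) with hS
  have hCC : (C (C (2⁻¹ : ℂ)) : Polynomial (Polynomial ℂ)) ≠ 0 :=
    C_ne_zero.2 (C_ne_zero.2 hhalf)
  have hfac_ne : ∀ c : ℂ, S - C (C c) ≠ 0 := by
    intro c
    rw [hS, biv_factor c]
    intro h
    have := natDegree_linear (a := C (2⁻¹:ℂ)) (b := (X : Polynomial ℂ) * C (2⁻¹:ℂ) - C c)
      (C_ne_zero.2 hhalf)
    rw [h, natDegree_zero] at this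
    exact one_ne_zero this.symm
  have hfac_deg : ∀ c : ℂ, (S - C (C c)).natDegree = 1 := by
    intro c
    rw [hS, biv_factor c]
    exact natDegree_linear (C_ne_zero.2 hhalf)
  have hfac_lc : ∀ c : ℂ, (S - C (C c)).leadingCoeff = C (2⁻¹ : ℂ) := by
    intro c
    rw [hS, biv_factor c]
    exact leadingCoeff_linear (C_ne_zero.2 hhalf)
  have hgprod : eval₂ (C.comp C) S f = ∏ k : Fin n, (S - C (C (r k))) := by
    rw [hf, eval₂_finset_prod]
    refine Finset.prod_congr rfl fun k _ => ?_
    rw [eval₂_sub, eval₂_X, eval₂_C, RingHom.comp_apply]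
  have hgdeg : (eval₂ (C.comp C) S f).natDegree = n := by
    rw [hgprod, natDegree_prod _ _ fun k _ => hfac_ne (r k)]
    simp [hfac_deg]
  have hglc : (eval₂ (C.comp C) S f).leadingCoeff = C ((2⁻¹ : ℂ) ^ n) := by
    rw [hgprod, leadingCoeff_prod,
      Finset.prod_congr rfl fun k _ => hfac_lc (r k), Finset.prod_const, Finset.card_univ,
      Fintype.card_fin, ← C_pow]
  have hgne : eval₂ (C.comp C) S f ≠ 0 := fun h => by
    rw [h, leadingCoeff_zero] at hglc
    exact (C_ne_zero.2 (pow_ne_zero n hhalf)) hglc.symm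
  -- facts about G2 = g - C f
  have hG2deg : (eval₂ (C.comp C) S f - C f).natDegree = n := by
    rw [natDegree_sub_eq_left_of_natDegree_lt (by rw [natDegree_C, hgdeg]; omega), hgdeg]
  have hG2lc : (eval₂ (C.comp C) S f - C f).leadingCoeff = C ((2⁻¹ : ℂ) ^ n) := by
    rw [leadingCoeff_sub_of_degree_lt, hglc]
    calc (C f).degree ≤ 0 := degree_C_le
      _ < (eval₂ (C.comp C) S f).degree := by
        rw [degree_eq_natDegree hgne, hgdeg]
        exact_mod_cast hno
  have hG2ne : (eval₂ (C.comp C) S f - C f) ≠ 0 := fun h => by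
    rw [h, leadingCoeff_zero] at hG2lc
    exact (C_ne_zero.2 (pow_ne_zero n hhalf)) hG2lc.symm
  -- f2 facts
  have hA_ne : (X - C (X : Polynomial ℂ)) * C (C (2⁻¹ : ℂ)) ≠ 0 := mul_ne_zero hXC0 hCC
  have hf2_0 : f2 ≠ 0 := by rintro rfl; rw [mul_zero] at hf2; exact hG2ne hf2.symm
  have hA_deg : ((X - C (X : Polynomial ℂ)) * C (C (2⁻¹ : ℂ))).natDegree = 1 := by
    rw [natDegree_mul hXC0 hCC, natDegree_X_sub_C, natDegree_C]
  have hA_lc : ((X - C (X : Polynomial ℂ)) * C (C (2⁻¹ : ℂ))).leadingCoeff = C (2⁻¹ : ℂ) := by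
    rw [leadingCoeff_mul, leadingCoeff_X_sub_C, leadingCoeff_C, one_mul]
  have hf2deg : f2.natDegree = n - 1 := by
    have h := natDegree_mul hA_ne hf2_0
    rw [hf2, hG2deg, hA_deg] at h
    omega
  have hf2lc : C (2⁻¹ : ℂ) * f2.leadingCoeff = C ((2⁻¹ : ℂ) ^ n) := by
    have h := leadingCoeff_mul ((X - C (X : Polynomial ℂ)) * C (C (2⁻¹ : ℂ))) f2
    rw [hf2, hG2lc, hA_lc] at h
    exact h.symm
  -- per-root specialization
  have hroot : ∀ i : Fin n, eval (r i) f = 0 := by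
    intro i
    rw [hf, eval_prod]
    exact Finset.prod_eq_zero (Finset.mem_univ i) (by simp)
  have key : ∀ i : Fin n, (eval (r i) (sylResultant f1 f2) = 0 ↔
      ∃ j : Fin n, j ≠ i ∧ ∃ k : Fin n, k ≠ i ∧ r j = 2 * r k - r i) := by
    intro i
    have hφC : ∀ a : ℂ, (evalRingHom (r i)) (C a) = a := fun a => eval_C
    have hφX : (evalRingHom (r i)) (X : Polynomial ℂ) = r i := eval_X
    have hlc1 : (evalRingHom (r i)) f1.leadingCoeff ≠ 0 := by
      rw [hf1lc, show (evalRingHom (r i)) (1 : Polynomial ℂ) = 1 from map_one _]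
      exact one_ne_zero
    have hlc2 : (evalRingHom (r i)) f2.leadingCoeff ≠ 0 := by
      intro h0
      have h := congrArg (evalRingHom (r i)) hf2lc
      rw [_root_.map_mul, hφC, h0, mul_zero, hφC] at h
      exact pow_ne_zero n hhalf h.symm
    have hdeg1 := natDegree_map_of_leadingCoeff_ne_zero (evalRingHom (r i)) hlc1
    have hdeg2 := natDegree_map_of_leadingCoeff_ne_zero (evalRingHom (r i)) hlc2
    have hmap : eval (r i) (sylResultant f1 f2)
        = sylResultant (f1.map (evalRingHom (r i))) (f2.map (evalRingHom (r i))) :=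
      map_sylResultant (evalRingHom (r i)) f1 f2 hdeg1 hdeg2
    -- specialize hf1
    have hmapXC : (X - C (X : Polynomial ℂ)).map (evalRingHom (r i)) = X - C (r i) := by
      rw [Polynomial.map_sub, map_X, map_C, hφX]
    have E1 : (X - C (r i)) * (f1.map (evalRingHom (r i))) = f := by
      have h := congrArg (Polynomial.map (evalRingHom (r i))) hf1
      rw [Polynomial.map_mul, hmapXC, Polynomial.map_sub, map_C] at h
      rw [show (evalRingHom (r i)) f = eval (r i) f from rfl, hroot i, map_zero, sub_zero,
        Polynomial.map_map, show ((evalRingHom (r i)).comp (C : ℂ →+* Polynomial ℂ)) = RingHom.id ℂ from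
          RingHom.ext fun a => eval_C, Polynomial.map_id] at h
      exact h
    have E1' : f1.map (evalRingHom (r i)) = ∏ j ∈ Finset.univ.erase i, (X - C (r j)) := by
      refine mul_left_cancel₀ (X_sub_C_ne_zero (r i)) ?_
      rw [E1, hf, ← Finset.mul_prod_erase Finset.univ _ (Finset.mem_univ i)]
    -- specialize hf2
    have E2 : (X - C (r i)) * (C (2⁻¹ : ℂ) * (f2.map (evalRingHom (r i))))
        = C ((2⁻¹ : ℂ) ^ n) * ∏ k : Fin n, (X - C (2 * r k - r i)) := by
      have h := congrArg (Polynomial.map (evalRingHom (r i))) hf2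
      rw [Polynomial.map_mul, Polynomial.map_mul, hmapXC, map_C, hφC,
        Polynomial.map_sub, map_C,
        show (evalRingHom (r i)) f = eval (r i) f from rfl, hroot i, map_zero, sub_zero] at h
      have hg : (eval₂ (C.comp C) S f).map (evalRingHom (r i))
          = C ((2⁻¹ : ℂ) ^ n) * ∏ k : Fin n, (X - C (2 * r k - r i)) := by
        have h1 : (eval₂ (C.comp C) S f).map (evalRingHom (r i))
            = eval₂ ((mapRingHom (evalRingHom (r i))).comp (C.comp C))
                (mapRingHom (evalRingHom (r i)) S) f := by
          rw [← coe_mapRingHom]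
          exact hom_eval₂ f (C.comp C) (mapRingHom (evalRingHom (r i))) S
        rw [h1]
        have h2 : (mapRingHom (evalRingHom (r i))).comp
            ((C : Polynomial ℂ →+* Polynomial (Polynomial ℂ)).comp (C : ℂ →+* Polynomial ℂ))
            = (C : ℂ →+* Polynomial ℂ) := by
          refine RingHom.ext fun a => ?_
          simp [coe_mapRingHom]
        have h3 : mapRingHom (evalRingHom (r i)) S = (C (r i) + X) * C (2⁻¹ : ℂ) := by
          rw [hS]
          simp [coe_mapRingHom, Polynomial.map_add, Polynomial.map_mul, map_C, map_X]
        rw [h2, h3, hf, eval₂_finset_prod]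
        have h4 : ∀ k : Fin n, eval₂ (C : ℂ →+* Polynomial ℂ) ((C (r i) + X) * C (2⁻¹ : ℂ))
            (X - C (r k)) = C (2⁻¹ : ℂ) * (X - C (2 * r k - r i)) := by
          intro k
          rw [eval₂_sub, eval₂_X, eval₂_C, half_factor (r i) (r k)]
        rw [Finset.prod_congr rfl fun k _ => h4 k, Finset.prod_mul_distrib,
          Finset.prod_const, Finset.card_univ, Fintype.card_fin, ← C_pow]
      rw [← mul_assoc, h, hg]
    have E2' : C (2⁻¹ : ℂ) * (f2.map (evalRingHom (r i)))
        = C ((2⁻¹ : ℂ) ^ n) * ∏ k ∈ Finset.univ.erase i, (X - C (2 * r k - r i)) := by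
      refine mul_left_cancel₀ (X_sub_C_ne_zero (r i)) ?_
      rw [E2, ← Finset.mul_prod_erase Finset.univ _ (Finset.mem_univ i)]
      have : 2 * r i - r i = r i := by ring
      rw [this]
      ring
    -- nonvanishing
    have hF1ne : f1.map (evalRingHom (r i)) ≠ 0 := by
      intro h
      rw [h, natDegree_zero] at hdeg1
      rw [← hdeg1] at hf1deg
      omega
    have hF2ne : f2.map (evalRingHom (r i)) ≠ 0 := by
      intro h
      rw [h, natDegree_zero] at hdeg2
      rw [← hdeg2] at hf2deg
      omega
    rw [hmap, sylResultant_eq_zero_iff_common_root _ _ hF1ne hF2ne]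
    constructor
    · rintro ⟨z, hz1, hz2⟩
      rw [E1', eval_prod] at hz1
      obtain ⟨j, hj, hj0⟩ := Finset.prod_eq_zero_iff.1 hz1
      have hzj : z = r j := by
        simpa [sub_eq_zero] using hj0
      have hz2' : eval z (C (2⁻¹ : ℂ) * (f2.map (evalRingHom (r i)))) = 0 := by
        rw [eval_mul, hz2, mul_zero]
      rw [E2', eval_mul, eval_prod] at hz2'
      rcases mul_eq_zero.1 hz2' with h | h
      · exact absurd h (by simp [pow_ne_zero, hhalf])
      · obtain ⟨k, hk, hk0⟩ := Finset.prod_eq_zero_iff.1 h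
        have hzk : z = 2 * r k - r i := by simpa [sub_eq_zero] using hk0
        exact ⟨j, (Finset.mem_erase.1 hj).1, k, (Finset.mem_erase.1 hk).1, by rw [← hzj, hzk]⟩
    · rintro ⟨j, hj, k, hk, hjk⟩
      refine ⟨r j, ?_, ?_⟩
      · rw [E1', eval_prod]
        exact Finset.prod_eq_zero (Finset.mem_erase.2 ⟨hj, Finset.mem_univ j⟩) (by simp)
      · have hz2' : eval (r j) (C (2⁻¹ : ℂ) * (f2.map (evalRingHom (r i)))) = 0 := by
          rw [E2', eval_mul, eval_prod]
          refine mul_eq_zero_of_right _ ?_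
          refine Finset.prod_eq_zero (Finset.mem_erase.2 ⟨hk, Finset.mem_univ k⟩) ?_
          simp [hjk]
        rw [eval_mul, eval_C, mul_eq_zero] at hz2'
        exact hz2'.resolve_left hhalf
  -- outer resultant
  have outer : sylResultant f (sylResultant f1 f2) = 0 ↔
      ∃ i : Fin n, eval (r i) (sylResultant f1 f2) = 0 := by
    by_cases hR0 : sylResultant f1 f2 = 0
    · rw [hR0]
      constructor
      · intro _
        exact ⟨⟨0, hno⟩, by rw [eval_zero]⟩
      · intro _
        exact sylResultant_zero_right f (by rw [hfd]; omega)
    · rw [sylResultant_eq_zero_iff_common_root f _ hf0 hR0]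
      constructor
      · rintro ⟨z, hz1, hz2⟩
        rw [hf, eval_prod] at hz1
        obtain ⟨i, _, hi⟩ := Finset.prod_eq_zero_iff.1 hz1
        have hzi : z = r i := by simpa [sub_eq_zero] using hi
        exact ⟨i, hzi ▸ hz2⟩
      · rintro ⟨i, hi⟩
        exact ⟨r i, hroot i, hi⟩
  rw [outer]
  simp only [key]
  -- final combinatorics
  rw [mul_eq_zero]
  constructor
  · rintro ⟨i, j, hj, k, hk, hjk⟩
    by_cases hkj : k = j
    · subst hkj
      have hij : r i = r k := by linear_combination hjk
      left
      rw [Finset.prod_eq_zero_iff]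
      rcases lt_or_gt_of_ne hk with h | h
      · refine ⟨k, Finset.mem_univ k, ?_⟩
        rw [Finset.prod_eq_zero_iff]
        refine ⟨i, Finset.mem_univ i, ?_⟩
        rw [ite_one_eq_zero]
        exact ⟨h, by rw [hij]; ring⟩
      · refine ⟨i, Finset.mem_univ i, ?_⟩
        rw [Finset.prod_eq_zero_iff]
        refine ⟨k, Finset.mem_univ k, ?_⟩
        rw [ite_one_eq_zero]
        exact ⟨h, by rw [hij]; ring⟩
    · right
      rw [Finset.prod_eq_zero_iff]
      have hij : i ≠ j := Ne.symm hj
      rcases lt_or_gt_of_ne hij with h | h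
      · refine ⟨i, Finset.mem_univ i, ?_⟩
        rw [Finset.prod_eq_zero_iff]
        refine ⟨j, Finset.mem_univ j, ?_⟩
        rw [Finset.prod_eq_zero_iff]
        refine ⟨k, Finset.mem_univ k, ?_⟩
        rw [ite_one_eq_zero]
        exact ⟨⟨h, hk, fun hh => hkj hh⟩, by linear_combination -hjk⟩
      · refine ⟨j, Finset.mem_univ j, ?_⟩
        rw [Finset.prod_eq_zero_iff]
        refine ⟨i, Finset.mem_univ i, ?_⟩
        rw [Finset.prod_eq_zero_iff]
        refine ⟨k, Finset.mem_univ k, ?_⟩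
        rw [ite_one_eq_zero]
        exact ⟨⟨h, fun hh => hkj hh, hk⟩, by linear_combination -hjk⟩
  · rintro (h | h)
    · rw [Finset.prod_eq_zero_iff] at h
      obtain ⟨i, _, h⟩ := h
      rw [Finset.prod_eq_zero_iff] at h
      obtain ⟨j, _, h⟩ := h
      rw [ite_one_eq_zero] at h
      obtain ⟨hij, h⟩ := h
      have h0 : r i - r j = 0 := (pow_eq_zero_iff (by norm_num : (2:ℕ) ≠ 0)).1 h
      exact ⟨i, j, hij.ne', j, hij.ne', by linear_combination h0⟩
    · rw [Finset.prod_eq_zero_iff] at h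
      obtain ⟨i, _, h⟩ := h
      rw [Finset.prod_eq_zero_iff] at h
      obtain ⟨j, _, h⟩ := h
      rw [Finset.prod_eq_zero_iff] at h
      obtain ⟨k, _, h⟩ := h
      rw [ite_one_eq_zero] at h
      obtain ⟨⟨hij, hki, hkj⟩, h⟩ := h
      exact ⟨i, j, hij.ne', k, hki, by linear_combination -h⟩
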